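/- arXiv:2104.14875 — 7 statements merged into one kernel-verified Lean document; each statement's English description precedes it below -/
import Mathlib

section
/- Let M, ρ be Hermitian 2×2 complex matrices and define the real 3×3 matrix R by R_{jk} = Re(tr(M σ_j ρ σ_k) + tr(M σ_k ρ σ_j)) for j,k ∈ {1,2,3}, where σ₁ = X, σ₂ = Y, σ₃ = Z. Then R is symmetric, and for every unit vector r = (r₁,r₂,r₃) ∈ ℝ³ the half-rotation expectation satisfies Re tr(M (r·σ) ρ (r·σ)) = (1/2)·Σ_{j,k} r_j R_{jk} r_k, i.e. the energy landscape of a π-Fraxis gate is the quadratic form (1/2)·rᵀR r. -/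
open Matrix Complex

noncomputable def PX : Matrix (Fin 2) (Fin 2) ℂ := !![0, 1; 1, 0]
noncomputable def PY : Matrix (Fin 2) (Fin 2) ℂ := !![0, -Complex.I; Complex.I, 0]
noncomputable def PZ : Matrix (Fin 2) (Fin 2) ℂ := !![1, 0; 0, -1]

/-- The Pauli matrices `σ₁ = X`, `σ₂ = Y`, `σ₃ = Z`. -/
noncomputable def pauli : Fin 3 → Matrix (Fin 2) (Fin 2) ℂ := ![PX, PY, PZ]

/-- `n·σ = n₁X + n₂Y + n₃Z`. -/
noncomputable def nsigma (n : Fin 3 → ℝ) : Matrix (Fin 2) (Fin 2) ℂ :=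
  (n 0 : ℂ) • PX + (n 1 : ℂ) • PY + (n 2 : ℂ) • PZ

/-- `R_n(θ) = cos(θ/2)•1 − i·sin(θ/2)•(n·σ)`. -/
noncomputable def Rgate (n : Fin 3 → ℝ) (θ : ℝ) : Matrix (Fin 2) (Fin 2) ℂ :=
  ((Real.cos (θ / 2) : ℂ)) • (1 : Matrix (Fin 2) (Fin 2) ℂ)
    - (Complex.I * (Real.sin (θ / 2) : ℂ)) • nsigma n

/-- The Fraxis coefficient matrix `R_{jk} = Re(tr(Mσ_jρσ_k) + tr(Mσ_kρσ_j))`. -/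
noncomputable def fraxisMatrix (M ρ : Matrix (Fin 2) (Fin 2) ℂ) : Matrix (Fin 3) (Fin 3) ℝ :=
  Matrix.of fun j k =>
    ((M * pauli j * ρ * pauli k).trace + (M * pauli k * ρ * pauli j).trace).re

lemma nsigma_eq (r : Fin 3 → ℝ) : nsigma r = ∑ j : Fin 3, (r j : ℂ) • pauli j := by
  simp [nsigma, pauli, Fin.sum_univ_three]

lemma key (M ρ : Matrix (Fin 2) (Fin 2) ℂ) (r : Fin 3 → ℝ) :
    (M * nsigma r * ρ * nsigma r).trace
      = ∑ j : Fin 3, ∑ k : Fin 3, (r j : ℂ) * (r k : ℂ) * (M * pauli j * ρ * pauli k).trace := by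
  simp only [nsigma_eq, Matrix.mul_sum, Matrix.sum_mul, Matrix.mul_smul, Matrix.smul_mul,
    Finset.smul_sum, Matrix.trace_sum, Matrix.trace_smul, smul_eq_mul, smul_smul]
  rw [Finset.sum_comm]
  refine Finset.sum_congr rfl fun j _ => Finset.sum_congr rfl fun k _ => by ring

theorem fraxis_energy_landscape (M ρ : Matrix (Fin 2) (Fin 2) ℂ)
    (hM : Mᴴ = M) (hρ : ρᴴ = ρ) :
    (fraxisMatrix M ρ).IsSymm ∧
    ∀ r : Fin 3 → ℝ, r 0 ^ 2 + r 1 ^ 2 + r 2 ^ 2 = 1 →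
      ((M * nsigma r * ρ * nsigma r).trace).re =
        (1 / 2) * ∑ j : Fin 3, ∑ k : Fin 3, r j * fraxisMatrix M ρ j k * r k := by
  constructor
  · ext j k
    simp [fraxisMatrix, Matrix.transpose_apply, add_comm]
  · intro r _
    have swap : ∑ j : Fin 3, ∑ k : Fin 3, r j * r k * ((M * pauli k * ρ * pauli j).trace).re
        = ∑ j : Fin 3, ∑ k : Fin 3, r j * r k * ((M * pauli j * ρ * pauli k).trace).re := by
      rw [Finset.sum_comm]
      refine Finset.sum_congr rfl fun j _ => Finset.sum_congr rfl fun k _ => by ring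
    have expand : ∑ j : Fin 3, ∑ k : Fin 3, r j * fraxisMatrix M ρ j k * r k
        = (∑ j : Fin 3, ∑ k : Fin 3, r j * r k * ((M * pauli j * ρ * pauli k).trace).re)
          + ∑ j : Fin 3, ∑ k : Fin 3, r j * r k * ((M * pauli k * ρ * pauli j).trace).re := by
      simp only [fraxisMatrix, Matrix.of_apply, Complex.add_re, ← Finset.sum_add_distrib]
      refine Finset.sum_congr rfl fun j _ => Finset.sum_congr rfl fun k _ => by ring
    have lhs : ((M * nsigma r * ρ * nsigma r).trace).re
        = ∑ j : Fin 3, ∑ k : Fin 3, r j * r k * ((M * pauli j * ρ * pauli k).trace).re := by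
      rw [key]
      simp only [Complex.re_sum, Complex.mul_re, Complex.mul_im, Complex.ofReal_re,
        Complex.ofReal_im]
      refine Finset.sum_congr rfl fun j _ => Finset.sum_congr rfl fun k _ => by ring
    rw [lhs, expand, swap]; ring
end

section
/- (Lemma 2.) Let n₁, n₂ ∈ ℝ³ be unit vectors such that n = n₁ × n₂ is also a unit vector (equivalently n₁ ⊥ n₂), and set θ = 2·arccos(−n₁·n₂). Then the general rotation gate equals the product of the two π-Fraxis gates: R_n(θ) = R_{n₁}(π)·R_{n₂}(π). -/
open Matrix Complex

theorem nsigma_mul_key (n₁ n₂ n : Fin 3 → ℝ)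
    (h0 : (n 0 : ℂ) = n₁ 1 * n₂ 2 - n₁ 2 * n₂ 1)
    (h1 : (n 1 : ℂ) = n₁ 2 * n₂ 0 - n₁ 0 * n₂ 2)
    (h2 : (n 2 : ℂ) = n₁ 0 * n₂ 1 - n₁ 1 * n₂ 0)
    (hd : (n₁ 0 : ℂ) * n₂ 0 + n₁ 1 * n₂ 1 + n₁ 2 * n₂ 2 = 0) :
    nsigma n₁ * nsigma n₂ = Complex.I • nsigma n := by
  have hI : (Complex.I : ℂ)^2 = -1 := Complex.I_sq
  ext i j
  fin_cases i <;> fin_cases j <;>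
    simp [nsigma, PX, PY, PZ, Matrix.mul_apply, Fin.sum_univ_two, h0, h1, h2] <;>
    first
      | linear_combination hd - (n₁ 1 : ℂ) * (n₂ 1) * hI
      | linear_combination ((n₁ 2 : ℂ) * n₂ 0 - (n₁ 0 : ℂ) * n₂ 2) * hI
      | linear_combination ((n₁ 0 : ℂ) * n₂ 2 - (n₁ 2 : ℂ) * n₂ 0) * hI

theorem rotation_as_two_pi_fraxis (n₁ n₂ : Fin 3 → ℝ)
    (h₁ : n₁ 0 ^ 2 + n₁ 1 ^ 2 + n₁ 2 ^ 2 = 1)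
    (h₂ : n₂ 0 ^ 2 + n₂ 1 ^ 2 + n₂ 2 ^ 2 = 1)
    (n : Fin 3 → ℝ) (hn : n = crossProduct n₁ n₂)
    (hunit : n 0 ^ 2 + n 1 ^ 2 + n 2 ^ 2 = 1)
    (θ : ℝ) (hθ : θ = 2 * Real.arccos (-(n₁ ⬝ᵥ n₂))) :
    Rgate n θ = Rgate n₁ Real.pi * Rgate n₂ Real.pi := by
  have hc : crossProduct n₁ n₂ = ![n₁ 1 * n₂ 2 - n₁ 2 * n₂ 1, n₁ 2 * n₂ 0 - n₁ 0 * n₂ 2,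
      n₁ 0 * n₂ 1 - n₁ 1 * n₂ 0] := cross_apply n₁ n₂
  have h0 : n 0 = n₁ 1 * n₂ 2 - n₁ 2 * n₂ 1 := by rw [hn, hc]; rfl
  have h1' : n 1 = n₁ 2 * n₂ 0 - n₁ 0 * n₂ 2 := by rw [hn, hc]; rfl
  have h2' : n 2 = n₁ 0 * n₂ 1 - n₁ 1 * n₂ 0 := by rw [hn, hc]; rfl
  have hdot : n₁ ⬝ᵥ n₂ = n₁ 0 * n₂ 0 + n₁ 1 * n₂ 1 + n₁ 2 * n₂ 2 := by
    simp [dotProduct, Fin.sum_univ_three]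
  have hd : n₁ 0 * n₂ 0 + n₁ 1 * n₂ 1 + n₁ 2 * n₂ 2 = 0 := by
    rw [h0, h1', h2'] at hunit
    nlinarith [sq_nonneg (n₁ 0 * n₂ 0 + n₁ 1 * n₂ 1 + n₁ 2 * n₂ 2)]
  have hθπ : θ = Real.pi := by
    rw [hθ, hdot, hd, neg_zero, Real.arccos_zero]; ring
  subst hθπ
  have hmul : nsigma n₁ * nsigma n₂ = Complex.I • nsigma n := by
    apply nsigma_mul_key <;> push_cast [h0, h1', h2'] <;> try ring
    exact_mod_cast congrArg (Complex.ofReal) hd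
  simp only [Rgate, Real.cos_pi_div_two, Real.sin_pi_div_two, Complex.ofReal_zero,
    Complex.ofReal_one, mul_one, zero_smul, zero_sub]
  rw [neg_mul_neg, smul_mul_smul_comm, hmul, smul_smul, Complex.I_mul_I,
    neg_one_mul, neg_smul]
end

section
/- Every element A of SU(2) (i.e. every 2×2 complex unitary matrix with determinant 1) can be written as a product of exactly two π-Fraxis gates: there exist unit vectors n₁, n₂ ∈ ℝ³ with A = R_{n₁}(π)·R_{n₂}(π). -/
open Matrix Complex

lemma Rgate_pi (n : Fin 3 → ℝ) : Rgate n Real.pi =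
    !![-Complex.I * (n 2 : ℂ), -Complex.I * ((n 0 : ℂ) - (n 1 : ℂ) * Complex.I);
       -Complex.I * ((n 0 : ℂ) + (n 1 : ℂ) * Complex.I), Complex.I * (n 2 : ℂ)] := by
  simp [Rgate, nsigma, PX, PY, PZ]
  ring

lemma prod_form (m n : Fin 3 → ℝ) :
    Rgate m Real.pi * Rgate n Real.pi =
    !![-((m 0 : ℂ)*n 0 + m 1 * n 1 + m 2 * n 2) - Complex.I * ((m 0 : ℂ)* n 1 - m 1 * n 0),
       -((m 2 : ℂ) * n 0 - m 0 * n 2) - Complex.I * ((m 1 : ℂ) * n 2 - m 2 * n 1);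
       ((m 2 : ℂ) * n 0 - m 0 * n 2) - Complex.I * ((m 1 : ℂ) * n 2 - m 2 * n 1),
       -((m 0 : ℂ)*n 0 + m 1 * n 1 + m 2 * n 2) + Complex.I * ((m 0 : ℂ)* n 1 - m 1 * n 0)] := by
  rw [Rgate_pi, Rgate_pi]
  ext i j
  fin_cases i <;> fin_cases j <;>
    simp [Matrix.mul_apply, Fin.sum_univ_two, Complex.ext_iff] <;> ring_nf <;> simp

/-- Key real lemma: given `w,x,y,z` on the unit 3-sphere, produce two unit vectors with
dot product `-w` and cross product `-(x,y,z)`. -/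
lemma key_s11 (w x y z : ℝ) (h : w^2 + x^2 + y^2 + z^2 = 1) :
    ∃ m n : Fin 3 → ℝ,
      m 0 ^ 2 + m 1 ^ 2 + m 2 ^ 2 = 1 ∧
      n 0 ^ 2 + n 1 ^ 2 + n 2 ^ 2 = 1 ∧
      m 0 * n 0 + m 1 * n 1 + m 2 * n 2 = -w ∧
      m 1 * n 2 - m 2 * n 1 = -x ∧
      m 2 * n 0 - m 0 * n 2 = -y ∧
      m 0 * n 1 - m 1 * n 0 = -z := by
  by_cases hxy : x^2 + y^2 = 0
  · -- x = y = 0, w² + z² = 1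
    have hx : x = 0 := by nlinarith [sq_nonneg x, sq_nonneg y]
    have hy : y = 0 := by nlinarith [sq_nonneg x, sq_nonneg y]
    refine ⟨![-w, z, 0], ![1, 0, 0], ?_, ?_, ?_, ?_, ?_, ?_⟩ <;>
      simp [hx, hy] <;> nlinarith
  · set s := Real.sqrt (x^2 + y^2) with hs
    have hs2 : s^2 = x^2 + y^2 := Real.sq_sqrt (by positivity)
    have hspos : 0 < s := by
      rw [hs]; apply Real.sqrt_pos.2
      rcases lt_or_eq_of_le (by positivity : (0:ℝ) ≤ x^2 + y^2) with h' | h'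
      · exact h'
      · exact absurd h'.symm hxy
    have hsne : s ≠ 0 := ne_of_gt hspos
    refine ⟨![(w*y - z*x)/s, (-(w*x) - z*y)/s, s], ![-y/s, x/s, 0], ?_, ?_, ?_, ?_, ?_, ?_⟩ <;>
      simp <;> field_simp <;>
      first
        | nlinarith [hs2, sq_nonneg s]
        | linear_combination (w*s*s) * hs2
        | linear_combination z * hs2
        | linear_combination w * hs2

theorem su2_eq_two_pi_fraxis (A : Matrix (Fin 2) (Fin 2) ℂ)
    (hA : A * Aᴴ = 1) (hdet : A.det = 1) :
    ∃ n₁ n₂ : Fin 3 → ℝ,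
      n₁ 0 ^ 2 + n₁ 1 ^ 2 + n₁ 2 ^ 2 = 1 ∧
      n₂ 0 ^ 2 + n₂ 1 ^ 2 + n₂ 2 ^ 2 = 1 ∧
      A = Rgate n₁ Real.pi * Rgate n₂ Real.pi := by
  -- Aᴴ = adjugate A
  have hadj : A * A.adjugate = 1 := by
    rw [Matrix.mul_adjugate, hdet]; simp
  have hAH : Aᴴ = A.adjugate := by
    have h1 : A.adjugate * A = 1 := by
      rw [Matrix.adjugate_mul, hdet]; simp
    calc Aᴴ = (A.adjugate * A) * Aᴴ := by rw [h1, one_mul]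
    _ = A.adjugate * (A * Aᴴ) := by rw [mul_assoc]
    _ = A.adjugate := by rw [hA, mul_one]
  rw [Matrix.adjugate_fin_two] at hAH
  have e11 : (starRingEnd ℂ) (A 0 0) = A 1 1 := by
    have := congrFun (congrFun hAH 0) 0; simpa [Matrix.conjTranspose_apply] using this
  have e10 : (starRingEnd ℂ) (A 0 1) = -A 1 0 := by
    have := congrFun (congrFun hAH 1) 0; simpa [Matrix.conjTranspose_apply] using this
  set a := A 0 0 with ha
  set b := A 0 1 with hb
  have hA10 : A 1 0 = -(starRingEnd ℂ) b := by rw [e10, neg_neg]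
  have hA11 : A 1 1 = (starRingEnd ℂ) a := e11.symm
  have hnorm : Complex.normSq a + Complex.normSq b = 1 := by
    have hd : a * A 1 1 - b * A 1 0 = 1 := by
      rw [Matrix.det_fin_two] at hdet; exact_mod_cast hdet
    rw [hA10, hA11] at hd
    have : (Complex.normSq a : ℂ) + Complex.normSq b = 1 := by
      rw [Complex.normSq_eq_conj_mul_self, Complex.normSq_eq_conj_mul_self]
      push_cast
      linear_combination hd
    exact_mod_cast this
  have hsphere : a.re^2 + b.im^2 + b.re^2 + a.im^2 = 1 := by
    simp [Complex.normSq_apply] at hnorm; nlinarith [hnorm]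
  obtain ⟨m, n, hm, hn, hdot, hc1, hc2, hc3⟩ := key_s11 a.re b.im b.re a.im hsphere
  refine ⟨m, n, hm, hn, ?_⟩
  rw [prod_form]
  ext i j
  fin_cases i <;> fin_cases j
  · show a = _
    simp [Complex.ext_iff]
    constructor <;> linarith
  · show b = _
    simp [Complex.ext_iff]
    constructor <;> linarith
  · show A 1 0 = _
    rw [hA10]
    simp [Complex.ext_iff]
    constructor <;> linarith
  · show A 1 1 = _
    rw [hA11]
    simp [Complex.ext_iff]
    constructor <;> linarith
end

section
/- Let H = X + Y + Z and let n = (a, a, −b) ∈ ℝ³ with a = (1/√2)·√(1/2 + 1/(2√3)) and b = √(1/2 − 1/(2√3)); then n is a unit vector, and the state ψ = R_n(π)·|0⟩ (where |0⟩ = (1,0)ᵀ ∈ ℂ²) is a ground state of H: it satisfies H·ψ = −√3·ψ. Hence a single Fraxis gate applied to |0⟩ produces the ground state of the toy Hamiltonian X + Y + Z. -/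
open Matrix Complex

lemma key_matrix (a b s : ℝ) (hs3 : s ^ 2 = 3) (hba : b = (s - 1) * a) :
    (PX + PY + PZ).mulVec ((Rgate ![a, a, -b] Real.pi).mulVec ![1, 0]) =
      ((-s : ℝ) : ℂ) • ((Rgate ![a, a, -b] Real.pi).mulVec ![1, 0]) := by
  have hcos : Real.cos (Real.pi / 2) = 0 := Real.cos_pi_div_two
  have hsin : Real.sin (Real.pi / 2) = 1 := Real.sin_pi_div_two
  funext i
  fin_cases i
  · simp only [Rgate, nsigma, PX, PY, PZ, hcos, hsin]
    simp [mulVec, dotProduct, Fin.sum_univ_succ]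
    rw [hba]
    apply Complex.ext
    · simp [Complex.ext_iff]
      try ring_nf
      try linear_combination a * hs3
    · simp [Complex.ext_iff]
      try ring_nf
      try linear_combination a * hs3
  · simp only [Rgate, nsigma, PX, PY, PZ, hcos, hsin]
    simp [mulVec, dotProduct, Fin.sum_univ_succ]
    rw [hba]
    apply Complex.ext
    · simp [Complex.ext_iff]
      try ring_nf
      try linear_combination a * hs3
    · simp [Complex.ext_iff]
      try ring_nf
      try linear_combination a * hs3

theorem fraxis_reaches_ground_state_of_toy_hamiltonian :
    let a : ℝ := (Real.sqrt 2)⁻¹ * Real.sqrt (1 / 2 + 1 / (2 * Real.sqrt 3))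
    let b : ℝ := Real.sqrt (1 / 2 - 1 / (2 * Real.sqrt 3))
    let n : Fin 3 → ℝ := ![a, a, -b]
    let H : Matrix (Fin 2) (Fin 2) ℂ := PX + PY + PZ
    let ψ : Fin 2 → ℂ := (Rgate n Real.pi).mulVec ![1, 0]
    n 0 ^ 2 + n 1 ^ 2 + n 2 ^ 2 = 1 ∧
      H.mulVec ψ = ((-(Real.sqrt 3) : ℝ) : ℂ) • ψ := by
  intro a b n H ψ
  set s : ℝ := Real.sqrt 3 with hs_def
  have hs3 : s ^ 2 = 3 := Real.sq_sqrt (by norm_num)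
  have hs1 : 1 ≤ s := by nlinarith [Real.sqrt_nonneg 3]
  have hspos : 0 < s := by linarith
  have ha2 : a ^ 2 = 1 / 4 + s / 12 := by
    have h1 : (0:ℝ) ≤ 1 / 2 + 1 / (2 * s) := by positivity
    have : a ^ 2 = (Real.sqrt 2)⁻¹ ^ 2 * (1 / 2 + 1 / (2 * s)) := by
      rw [mul_pow, Real.sq_sqrt h1]
    rw [this, inv_pow, Real.sq_sqrt (by norm_num : (0:ℝ) ≤ 2)]
    field_simp
    nlinarith
  have hb2 : b ^ 2 = 1 / 2 - s / 6 := by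
    have h1 : (0:ℝ) ≤ 1 / 2 - 1 / (2 * s) := by
      rw [sub_nonneg, div_le_iff₀ (by positivity)]
      linarith
    rw [Real.sq_sqrt h1]
    field_simp
    nlinarith
  have ha0 : 0 ≤ a := by positivity
  have hb0 : 0 ≤ b := Real.sqrt_nonneg _
  have hba : b = (s - 1) * a := by
    have hsq : b ^ 2 = ((s - 1) * a) ^ 2 := by nlinarith
    have h2 : (0:ℝ) ≤ (s - 1) * a := by nlinarith
    calc b = Real.sqrt (b ^ 2) := (Real.sqrt_sq hb0).symm
    _ = Real.sqrt (((s - 1) * a) ^ 2) := by rw [hsq]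
    _ = (s - 1) * a := Real.sqrt_sq h2
  constructor
  · show a ^ 2 + a ^ 2 + (-b) ^ 2 = 1
    nlinarith
  · exact key_matrix a b s hs3 hba
end

section
/- (Sinusoidal dependence on the angle, enabling Rotosolve/NFT.) Let M, ρ be Hermitian 2×2 complex matrices and n ∈ ℝ³ a unit vector. Then there exist real constants a, b, c such that for every θ ∈ ℝ, Re tr(M R_n(θ) ρ R_n(θ)†) = a·cos θ + b·sin θ + c. Consequently the expectation value as a function of the rotation angle is fully determined by its values at three distinct angles. -/
open Matrix Complex

lemma nsigma_herm (n : Fin 3 → ℝ) : (nsigma n)ᴴ = nsigma n := by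
  unfold nsigma PX PY PZ
  ext i j
  fin_cases i <;> fin_cases j <;>
    simp [Matrix.conjTranspose_apply, Matrix.add_apply, Matrix.smul_apply]

lemma Rgate_conjT (n : Fin 3 → ℝ) (θ : ℝ) :
    (Rgate n θ)ᴴ = ((Real.cos (θ / 2) : ℂ)) • (1 : Matrix (Fin 2) (Fin 2) ℂ)
      + (Complex.I * (Real.sin (θ / 2) : ℂ)) • nsigma n := by
  unfold Rgate
  rw [conjTranspose_sub, conjTranspose_smul, conjTranspose_smul, conjTranspose_one,
    nsigma_herm]
  simp only [Complex.star_def, _root_.map_mul, Complex.conj_I, Complex.conj_ofReal,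
    neg_mul, neg_smul, sub_neg_eq_add]

lemma tri (A B C θ₁ θ₂ θ₃ : ℝ)
    (h12 : Real.sin ((θ₁ - θ₂) / 2) ≠ 0)
    (h23 : Real.sin ((θ₂ - θ₃) / 2) ≠ 0)
    (h13 : Real.sin ((θ₁ - θ₃) / 2) ≠ 0)
    (e1 : A * Real.cos θ₁ + B * Real.sin θ₁ + C = 0)
    (e2 : A * Real.cos θ₂ + B * Real.sin θ₂ + C = 0)
    (e3 : A * Real.cos θ₃ + B * Real.sin θ₃ + C = 0) :
    A = 0 ∧ B = 0 ∧ C = 0 := by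
  set u := (θ₁ + θ₂) / 2 with hu
  set v := (θ₂ + θ₃) / 2 with hv
  have h1 : Real.sin ((θ₁ - θ₂) / 2) * (-A * Real.sin u + B * Real.cos u) = 0 := by
    linear_combination (e1 - e2) / 2 - (A / 2) * Real.cos_sub_cos θ₁ θ₂
      - (B / 2) * Real.sin_sub_sin θ₁ θ₂
  have h2 : Real.sin ((θ₂ - θ₃) / 2) * (-A * Real.sin v + B * Real.cos v) = 0 := by
    linear_combination (e2 - e3) / 2 - (A / 2) * Real.cos_sub_cos θ₂ θ₃
      - (B / 2) * Real.sin_sub_sin θ₂ θ₃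
  have f1 : -A * Real.sin u + B * Real.cos u = 0 :=
    (mul_eq_zero.mp h1).resolve_left h12
  have f2 : -A * Real.sin v + B * Real.cos v = 0 :=
    (mul_eq_zero.mp h2).resolve_left h23
  have huv : u - v = (θ₁ - θ₃) / 2 := by rw [hu, hv]; ring
  have hsuv : Real.sin (u - v) = Real.sin u * Real.cos v - Real.cos u * Real.sin v :=
    Real.sin_sub u v
  rw [huv] at hsuv
  have hA : A * Real.sin ((θ₁ - θ₃) / 2) = 0 := by
    linear_combination A * hsuv - Real.cos v * f1 + Real.cos u * f2
  have hB : B * Real.sin ((θ₁ - θ₃) / 2) = 0 := by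
    linear_combination B * hsuv - Real.sin v * f1 + Real.sin u * f2
  have hA0 : A = 0 := (mul_eq_zero.mp hA).resolve_right h13
  have hB0 : B = 0 := (mul_eq_zero.mp hB).resolve_right h13
  refine ⟨hA0, hB0, ?_⟩
  rw [hA0, hB0] at e1; linarith

lemma sin_half_ne (θ₁ θ₂ : ℝ) (h : ∀ k : ℤ, θ₁ - θ₂ ≠ 2 * Real.pi * k) :
    Real.sin ((θ₁ - θ₂) / 2) ≠ 0 := by
  intro hs
  rcases Real.sin_eq_zero_iff.mp hs with ⟨k, hk⟩
  exact h k (by push_cast at hk ⊢; linarith)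

theorem expectation_sinusoidal_in_angle (M ρ : Matrix (Fin 2) (Fin 2) ℂ)
    (hM : Mᴴ = M) (hρ : ρᴴ = ρ)
    (n : Fin 3 → ℝ) (hn : n 0 ^ 2 + n 1 ^ 2 + n 2 ^ 2 = 1)
    (E : ℝ → ℝ)
    (hE : E = fun θ => ((M * Rgate n θ * ρ * (Rgate n θ)ᴴ).trace).re) :
    (∃ a b c : ℝ, ∀ θ : ℝ, E θ = a * Real.cos θ + b * Real.sin θ + c) ∧
    -- consequently `E` is fully determined by its values at three distinct angles
    (∀ θ₁ θ₂ θ₃ : ℝ,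
      (∀ k : ℤ, θ₁ - θ₂ ≠ 2 * Real.pi * k) →
      (∀ k : ℤ, θ₂ - θ₃ ≠ 2 * Real.pi * k) →
      (∀ k : ℤ, θ₁ - θ₃ ≠ 2 * Real.pi * k) →
      ∀ g : ℝ → ℝ,
        (∃ a b c : ℝ, ∀ θ : ℝ, g θ = a * Real.cos θ + b * Real.sin θ + c) →
        g θ₁ = E θ₁ → g θ₂ = E θ₂ → g θ₃ = E θ₃ → ∀ θ : ℝ, g θ = E θ) := by
  have main : ∃ a b c : ℝ, ∀ θ : ℝ, E θ = a * Real.cos θ + b * Real.sin θ + c := by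
    set N := nsigma n with hN
    set t1 := (M * ρ).trace with ht1
    set t2 := (M * ρ * N).trace with ht2
    set t3 := (M * N * ρ).trace with ht3
    set t4 := (M * N * ρ * N).trace with ht4
    refine ⟨((t1 - t4) / 2).re, (Complex.I * (t2 - t3) / 2).re, ((t1 + t4) / 2).re, ?_⟩
    intro θ
    have hc2 : ((Real.cos (θ / 2) : ℂ)) ^ 2 = (1 + (Real.cos θ : ℂ)) / 2 := by
      have h := Real.cos_sq (θ / 2)
      rw [show 2 * (θ / 2) = θ by ring] at h
      rw [← Complex.ofReal_pow, h]; push_cast; ring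
    have hs2 : ((Real.sin (θ / 2) : ℂ)) ^ 2 = (1 - (Real.cos θ : ℂ)) / 2 := by
      have h := Real.cos_sq (θ / 2)
      rw [show 2 * (θ / 2) = θ by ring] at h
      have h2 : Real.sin (θ / 2) ^ 2 = (1 - Real.cos θ) / 2 := by
        have := Real.sin_sq_add_cos_sq (θ / 2); linarith
      rw [← Complex.ofReal_pow, h2]; push_cast; ring
    have hcs : ((Real.cos (θ / 2) : ℂ)) * ((Real.sin (θ / 2) : ℂ))
        = (Real.sin θ : ℂ) / 2 := by
      have h := Real.sin_two_mul (θ / 2)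
      rw [show 2 * (θ / 2) = θ by ring] at h
      rw [← Complex.ofReal_mul, show Real.cos (θ/2) * Real.sin (θ/2)
        = Real.sin θ / 2 by linear_combination -(h / 2)]; push_cast; ring
    have key : (M * Rgate n θ * ρ * (Rgate n θ)ᴴ).trace
        = (Real.cos θ : ℂ) * ((t1 - t4) / 2)
          + (Real.sin θ : ℂ) * (Complex.I * (t2 - t3) / 2) + (t1 + t4) / 2 := by
      rw [Rgate_conjT]
      unfold Rgate
      rw [← hN]
      simp only [Matrix.mul_sub, Matrix.sub_mul, Matrix.mul_add, Matrix.add_mul,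
        Matrix.mul_smul, Matrix.smul_mul, Matrix.mul_one, Matrix.one_mul,
        Matrix.trace_add, Matrix.trace_sub, Matrix.trace_smul, smul_smul, smul_eq_mul,
        ← ht1, ← ht2, ← ht3, ← ht4]
      have hI : Complex.I ^ 2 = -1 := Complex.I_sq
      linear_combination t1 * hc2 + Complex.I * (t2 - t3) * hcs
        - Complex.I ^ 2 * t4 * hs2 - ((1 - (Real.cos θ : ℂ)) / 2) * t4 * hI
    rw [hE]
    simp only [key, Complex.add_re, Complex.mul_re, Complex.ofReal_re, Complex.ofReal_im]
    ring
  refine ⟨main, ?_⟩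
  intro θ₁ θ₂ θ₃ h12 h23 h13 g hg hg1 hg2 hg3 θ
  obtain ⟨a, b, c, hgf⟩ := hg
  obtain ⟨a', b', c', hEf⟩ := main
  have s12 := sin_half_ne θ₁ θ₂ h12
  have s23 := sin_half_ne θ₂ θ₃ h23
  have s13 := sin_half_ne θ₁ θ₃ h13
  have e1 : (a - a') * Real.cos θ₁ + (b - b') * Real.sin θ₁ + (c - c') = 0 := by
    have := hgf θ₁; have := hEf θ₁; nlinarith [hg1]
  have e2 : (a - a') * Real.cos θ₂ + (b - b') * Real.sin θ₂ + (c - c') = 0 := by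
    have := hgf θ₂; have := hEf θ₂; nlinarith [hg2]
  have e3 : (a - a') * Real.cos θ₃ + (b - b') * Real.sin θ₃ + (c - c') = 0 := by
    have := hgf θ₃; have := hEf θ₃; nlinarith [hg3]
  obtain ⟨hA, hB, hC⟩ := tri _ _ _ _ _ _ s12 s23 s13 e1 e2 e3
  have hA' : a = a' := by linarith
  have hB' : b = b' := by linarith
  have hC' : c = c' := by linarith
  rw [hgf θ, hEf θ, hA', hB', hC']
end

section
/- (KL divergence of the R_y (Rotosolve) ansatz from Haar for one qubit.) With P(x) = 1/(π·√(x(1−x))) on (0,1) and the one-qubit Haar fidelity density identically equal to 1 on (0,1), the Kullback–Leibler divergence equals log(4/π): ∫_{x ∈ (0,1)} (1/(π·√(x(1−x))))·log(1/(π·√(x(1−x)))) dx = log(4/π). -/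
open MeasureTheory Real Set intervalIntegral

-- basic bound: -log y ≤ 2 / sqrt y for y > 0
lemma neg_log_le (y : ℝ) (hy : 0 < y) : -Real.log y ≤ 2 / Real.sqrt y := by
  have hs : 0 < Real.sqrt y := Real.sqrt_pos.2 hy
  have h1 : Real.log (1 / Real.sqrt y) ≤ 1 / Real.sqrt y - 1 :=
    Real.log_le_sub_one_of_pos (by positivity)
  have h2 : Real.log (1 / Real.sqrt y) = -(1/2) * Real.log y := by
    rw [one_div, Real.log_inv, Real.log_sqrt hy.le]; ring
  have h3 : (2:ℝ)/Real.sqrt y = 2 * (1/Real.sqrt y) := by ring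
  linarith

lemma intInt_log_sin : IntervalIntegrable (fun x => Real.log (Real.sin x)) volume 0 (π/2) := by
  rw [intervalIntegrable_iff_integrableOn_Ioo_of_le (by positivity)]
  have hg : IntegrableOn (fun x : ℝ => 4 * x ^ (-(1:ℝ)/2)) (Ioo 0 (π/2)) := by
    exact ((integrableOn_Ioo_rpow_iff (by positivity)).2 (by norm_num)).const_mul 4
  refine hg.integrable.mono' ((Real.measurable_log.comp Real.measurable_sin).aestronglyMeasurable) ?_
  filter_upwards [ae_restrict_mem measurableSet_Ioo] with x hx
  have hx0 : 0 < x := hx.1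
  have hxpi : x < π/2 := hx.2
  have hsinlb : 2/π * x ≤ Real.sin x := Real.mul_le_sin hx0.le hxpi.le
  have hsinpos : 0 < Real.sin x := lt_of_lt_of_le (by positivity) hsinlb
  have hsinle : Real.sin x ≤ 1 := Real.sin_le_one x
  have hlogle : Real.log (Real.sin x) ≤ 0 := Real.log_nonpos hsinpos.le hsinle
  rw [Real.norm_eq_abs, abs_of_nonpos hlogle]
  have h1 : -Real.log (Real.sin x) ≤ 2 / Real.sqrt (Real.sin x) := neg_log_le _ hsinpos
  have h2 : 2 / Real.sqrt (Real.sin x) ≤ 2 / Real.sqrt (2/π * x) := by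
    apply div_le_div_of_nonneg_left (by norm_num) (Real.sqrt_pos.2 (by positivity))
    exact Real.sqrt_le_sqrt hsinlb
  have h3 : 2 / Real.sqrt (2/π * x) ≤ 4 * x ^ (-(1:ℝ)/2) := by
    rw [Real.sqrt_mul (by positivity), div_le_iff₀ (by positivity)]
    have hxr : x ^ (-(1:ℝ)/2) * Real.sqrt x = 1 := by
      rw [Real.sqrt_eq_rpow, ← Real.rpow_add hx0]
      norm_num
    have hs2 : (1:ℝ) ≤ 2 * Real.sqrt (2/π) := by
      have h24 : (1:ℝ)/2 ≤ 2/π := by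
        rw [div_le_div_iff₀ two_pos Real.pi_pos]; nlinarith [Real.pi_le_four]
      nlinarith [Real.sq_sqrt (show (0:ℝ) ≤ 2/π by positivity),
        Real.sqrt_nonneg (2/π)]
    calc (2:ℝ) = 2 * 1 := by ring
    _ ≤ 2 * (2 * Real.sqrt (2/π)) * (x ^ (-(1:ℝ)/2) * Real.sqrt x) := by
        rw [hxr]; nlinarith
    _ = 4 * x ^ (-(1:ℝ)/2) * (Real.sqrt (2/π) * Real.sqrt x) := by ring
  linarith

lemma intInt_log_cos : IntervalIntegrable (fun x => Real.log (Real.cos x)) volume 0 (π/2) := by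
  have h := (intInt_log_sin.comp_sub_left (π/2)).symm
  simp only [sub_self, sub_zero] at h
  simpa only [Real.sin_pi_div_two_sub] using h

lemma intInt_log_sin_pi : IntervalIntegrable (fun x => Real.log (Real.sin x)) volume 0 π := by
  apply intInt_log_sin.trans
  have h := intInt_log_cos.comp_sub_right (π/2)
  simp only [zero_add] at h
  rw [show π/2 + π/2 = π by ring] at h
  have he : (fun x => Real.log (Real.cos (x - π/2))) = fun x => Real.log (Real.sin x) :=
    funext fun x => by rw [Real.cos_sub_pi_div_two]
  rwa [he] at h

lemma log_sin_integral : ∫ x in (0:ℝ)..(π/2), Real.log (Real.sin x) = -(π/2) * Real.log 2 := by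
  set I := ∫ x in (0:ℝ)..(π/2), Real.log (Real.sin x) with hI
  -- cos integral equals I
  have hJ : ∫ x in (0:ℝ)..(π/2), Real.log (Real.cos x) = I := by
    have := intervalIntegral.integral_comp_sub_left
      (fun x => Real.log (Real.sin x)) (π/2) (a := 0) (b := π/2)
    simp only [sub_self, sub_zero] at this
    rw [hI, ← this]
    congr 1
    ext x
    rw [Real.sin_pi_div_two_sub]
  -- second half of [0, π]
  have hsecond : ∫ x in (π/2:ℝ)..π, Real.log (Real.sin x) = I := by
    have := intervalIntegral.integral_comp_add_right
      (fun x => Real.log (Real.sin x)) (π/2) (a := 0) (b := π/2)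
    simp only [zero_add] at this
    rw [show π/2 + π/2 = π by ring] at this
    rw [← this, ← hJ]
    congr 1
    ext x
    rw [show Real.sin (x + π/2) = Real.cos x by rw [Real.sin_add]; simp]
  have hfull : ∫ x in (0:ℝ)..π, Real.log (Real.sin x) = 2 * I := by
    rw [← intervalIntegral.integral_add_adjacent_intervals
      (a := 0) (b := π/2) (c := π) intInt_log_sin
      (intInt_log_sin_pi.mono_set (by rw [Set.uIcc_subset_uIcc_iff_le] <;>
        constructor <;> simp [Real.pi_pos.le, Real.pi_nonneg, le_refl] <;>
        linarith [Real.pi_pos])), hsecond]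
    ring
  -- the doubling identity
  have hdouble : ∫ x in (0:ℝ)..(π/2), Real.log (Real.sin (2*x)) = I := by
    have := intervalIntegral.integral_comp_mul_left
      (fun x => Real.log (Real.sin x)) (c := 2) (a := 0) (b := π/2) two_ne_zero
    rw [this]
    simp only [mul_zero, smul_eq_mul]
    rw [show (2:ℝ) * (π/2) = π by ring, hfull]
    ring
  have hint2 : IntervalIntegrable (fun x => Real.log (Real.sin (2*x))) volume 0 (π/2) := by
    have h := intInt_log_sin_pi.comp_mul_left (c := 2)
    simpa [Real.pi_nonneg] using h
  -- 2I = I - (π/2) log 2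
  have key : I + I = I - (π/2) * Real.log 2 := by
    have hsum : I + I = ∫ x in (0:ℝ)..(π/2),
        (Real.log (Real.sin x) + Real.log (Real.cos x)) := by
      rw [intervalIntegral.integral_add intInt_log_sin intInt_log_cos, hJ]
    have hcongr : ∫ x in (0:ℝ)..(π/2),
        (Real.log (Real.sin x) + Real.log (Real.cos x))
        = ∫ x in (0:ℝ)..(π/2), (Real.log (Real.sin (2*x)) - Real.log 2) := by
      rw [intervalIntegral.integral_of_le (by positivity),
        intervalIntegral.integral_of_le (by positivity),
        MeasureTheory.integral_Ioc_eq_integral_Ioo,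
        MeasureTheory.integral_Ioc_eq_integral_Ioo]
      apply MeasureTheory.setIntegral_congr_fun measurableSet_Ioo
      intro x hx
      show Real.log (Real.sin x) + Real.log (Real.cos x)
        = Real.log (Real.sin (2*x)) - Real.log 2
      have hs : 0 < Real.sin x := Real.sin_pos_of_pos_of_lt_pi hx.1
        (hx.2.trans (by linarith [Real.pi_pos]))
      have hc : 0 < Real.cos x := Real.cos_pos_of_mem_Ioo
        ⟨by linarith [hx.1, Real.pi_pos], hx.2⟩
      rw [Real.sin_two_mul, Real.log_mul (by positivity) hc.ne',
        Real.log_mul two_ne_zero hs.ne']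
      ring
    rw [hsum, hcongr, intervalIntegral.integral_sub hint2 intervalIntegrable_const,
      hdouble, intervalIntegral.integral_const]
    simp only [smul_eq_mul, sub_zero]
  linarith

lemma sin_sq_image : (fun θ : ℝ => Real.sin θ ^ 2) '' Set.Ioo 0 (π/2) = Set.Ioo 0 1 := by
  ext y
  constructor
  · rintro ⟨θ, hθ, rfl⟩
    have hs : 0 < Real.sin θ := Real.sin_pos_of_pos_of_lt_pi hθ.1
      (hθ.2.trans (by linarith [Real.pi_pos]))
    have hs1 : Real.sin θ < 1 := by
      have := Real.strictMonoOn_sin (a := θ) (b := π/2)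
        ⟨by linarith [hθ.1, Real.pi_pos], hθ.2.le⟩
        ⟨by linarith [Real.pi_pos], le_refl _⟩ hθ.2
      simpa using this
    show Real.sin θ ^ 2 ∈ Set.Ioo 0 1
    exact ⟨by positivity, by nlinarith⟩
  · rintro ⟨hy0, hy1⟩
    refine ⟨Real.arcsin (Real.sqrt y), ⟨?_, ?_⟩, ?_⟩
    · exact Real.arcsin_pos.2 (Real.sqrt_pos.2 hy0)
    · apply Real.arcsin_lt_pi_div_two.2
      rw [show (1:ℝ) = Real.sqrt 1 by simp]
      exact Real.sqrt_lt_sqrt hy0.le hy1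
    · show Real.sin (Real.arcsin (Real.sqrt y)) ^ 2 = y
      rw [Real.sin_arcsin (by linarith [Real.sqrt_nonneg y]) (by
        rw [show (1:ℝ) = Real.sqrt 1 by simp]; exact Real.sqrt_le_sqrt hy1.le)]
      exact Real.sq_sqrt hy0.le

theorem kl_divergence_ry_ansatz_eq_log_four_div_pi :
    ∫ x in Set.Ioo (0 : ℝ) 1,
        (1 / (Real.pi * Real.sqrt (x * (1 - x))))
          * Real.log (1 / (Real.pi * Real.sqrt (x * (1 - x))))
      = Real.log (4 / Real.pi) := by
  have hπ := Real.pi_pos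
  -- change of variables x = sin² θ
  rw [← sin_sq_image, integral_image_eq_integral_abs_deriv_smul measurableSet_Ioo
    (f' := fun θ => 2 * Real.sin θ * Real.cos θ)
    (fun θ _ => by
      simpa [mul_comm, mul_assoc, mul_left_comm] using
        (((Real.hasDerivAt_sin θ).fun_pow 2).hasDerivWithinAt :
          HasDerivWithinAt (fun θ : ℝ => Real.sin θ ^ 2)
            (2 * Real.sin θ ^ 1 * Real.cos θ) (Set.Ioo 0 (π/2)) θ))
    (by
      intro a ha b hb hab
      have hsa : 0 ≤ Real.sin a := Real.sin_nonneg_of_nonneg_of_le_pi ha.1.le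
        (by linarith [ha.2, Real.pi_pos])
      have hsb : 0 ≤ Real.sin b := Real.sin_nonneg_of_nonneg_of_le_pi hb.1.le
        (by linarith [hb.2, Real.pi_pos])
      have hab' : Real.sin a ^ 2 = Real.sin b ^ 2 := hab
      have : Real.sin a = Real.sin b := by nlinarith [sq_nonneg (Real.sin a - Real.sin b)]
      exact Real.injOn_sin ⟨by linarith [ha.1, Real.pi_pos], by linarith [ha.2]⟩
        ⟨by linarith [hb.1, Real.pi_pos], by linarith [hb.2]⟩ this)]
  -- simplify the integrand on (0, π/2)
  have hcongr : ∫ θ in Set.Ioo (0:ℝ) (π/2),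
      |2 * Real.sin θ * Real.cos θ| •
        ((1 / (Real.pi * Real.sqrt (Real.sin θ ^ 2 * (1 - Real.sin θ ^ 2))))
          * Real.log (1 / (Real.pi * Real.sqrt (Real.sin θ ^ 2 * (1 - Real.sin θ ^ 2)))))
      = ∫ θ in Set.Ioo (0:ℝ) (π/2),
        (2/π) * (-(Real.log π + Real.log (Real.sin θ) + Real.log (Real.cos θ))) := by
    apply MeasureTheory.setIntegral_congr_fun measurableSet_Ioo
    intro θ hθ
    have hs : 0 < Real.sin θ := Real.sin_pos_of_pos_of_lt_pi hθ.1
      (hθ.2.trans (by linarith))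
    have hc : 0 < Real.cos θ := Real.cos_pos_of_mem_Ioo ⟨by linarith [hθ.1], hθ.2⟩
    have h1 : (1:ℝ) - Real.sin θ ^ 2 = Real.cos θ ^ 2 := by
      rw [← Real.sin_sq_add_cos_sq θ]; ring
    have h2 : Real.sqrt (Real.sin θ ^ 2 * (1 - Real.sin θ ^ 2))
        = Real.sin θ * Real.cos θ := by
      rw [h1, show Real.sin θ ^ 2 * Real.cos θ ^ 2 = (Real.sin θ * Real.cos θ)^2 by ring,
        Real.sqrt_sq (by positivity)]
    show |2 * Real.sin θ * Real.cos θ| • _ = _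
    rw [h2, abs_of_pos (by positivity), smul_eq_mul]
    have h3 : Real.log (1 / (π * (Real.sin θ * Real.cos θ)))
        = -(Real.log π + Real.log (Real.sin θ) + Real.log (Real.cos θ)) := by
      rw [one_div, Real.log_inv, Real.log_mul (by positivity) (by positivity),
        Real.log_mul hs.ne' hc.ne']
      ring
    rw [h3]
    field_simp <;> ring
  rw [hcongr]
  -- evaluate
  rw [← MeasureTheory.integral_Ioc_eq_integral_Ioo,
    ← intervalIntegral.integral_of_le (by positivity)]
  have hsplit : ∫ θ in (0:ℝ)..(π/2),
      (2/π) * (-(Real.log π + Real.log (Real.sin θ) + Real.log (Real.cos θ)))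
      = (2/π) * (-((π/2) * Real.log π
          + (∫ θ in (0:ℝ)..(π/2), Real.log (Real.sin θ))
          + (∫ θ in (0:ℝ)..(π/2), Real.log (Real.cos θ)))) := by
    rw [intervalIntegral.integral_const_mul]
    congr 1
    rw [intervalIntegral.integral_neg]
    congr 1
    rw [intervalIntegral.integral_add (intervalIntegrable_const.add intInt_log_sin)
        intInt_log_cos,
      intervalIntegral.integral_add intervalIntegrable_const intInt_log_sin,
      intervalIntegral.integral_const]
    simp [smul_eq_mul]
  have hcos : ∫ θ in (0:ℝ)..(π/2), Real.log (Real.cos θ) = -(π/2) * Real.log 2 := by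
    have := intervalIntegral.integral_comp_sub_left
      (fun x => Real.log (Real.sin x)) (π/2) (a := 0) (b := π/2)
    simp only [sub_self, sub_zero] at this
    rw [← log_sin_integral, ← this]
    congr 1; ext x; rw [Real.sin_pi_div_two_sub]
  rw [hsplit, log_sin_integral, hcos]
  rw [Real.log_div (by norm_num) (ne_of_gt hπ),
    show (4:ℝ) = 2^2 by norm_num, Real.log_pow]
  field_simp
  ring
end

section
/- (Pushforward of the uniform angle to the fidelity.) Let μ be the uniform probability measure on the interval [−π, π] (i.e. (2π)⁻¹ times Lebesgue measure restricted to [−π, π]). Then the pushforward of μ under the map θ ↦ cos²(θ/2) equals the measure on ℝ with density x ↦ 1/(π·√(x(1−x))) on (0,1) (and density 0 elsewhere) with respect to Lebesgue measure. That is, the fidelity F = |⟨0|R_y(θ)|0⟩|² = cos²(θ/2) of a uniformly random R_y rotation follows the arcsine distribution. -/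
open MeasureTheory Real Set
open scoped ENNReal

noncomputable def gg : ℝ → ℝ := fun x => 2 * Real.arccos (Real.sqrt x)

lemma gg_deriv {x : ℝ} (hx : x ∈ Ioo (0:ℝ) 1) :
    HasDerivAt gg (-(1 / Real.sqrt (x * (1 - x)))) x := by
  obtain ⟨h0, h1⟩ := hx
  have hs0 : Real.sqrt x ≠ 0 := by positivity
  have hsne1 : Real.sqrt x ≠ 1 := by
    have : Real.sqrt x < 1 := by
      rw [show (1:ℝ) = Real.sqrt 1 by simp]
      exact Real.sqrt_lt_sqrt h0.le h1
    exact this.ne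
  have hsnem1 : Real.sqrt x ≠ -1 := by
    have := Real.sqrt_nonneg x; linarith [this]
  have h1' : HasDerivAt (fun y : ℝ => Real.arccos (Real.sqrt y))
      (-(1 / Real.sqrt (1 - (Real.sqrt x) ^ 2)) * (1 / (2 * Real.sqrt x))) x :=
    (Real.hasDerivAt_arccos hsnem1 hsne1).comp x (Real.hasDerivAt_sqrt h0.ne')
  have h2 : HasDerivAt gg (2 * (-(1 / Real.sqrt (1 - (Real.sqrt x) ^ 2)) * (1 / (2 * Real.sqrt x)))) x :=
    h1'.const_mul 2
  convert h2 using 1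
  rw [Real.sq_sqrt h0.le, Real.sqrt_mul h0.le]
  have hx1 : Real.sqrt (1 - x) > 0 := Real.sqrt_pos.mpr (by linarith)
  have hxx : Real.sqrt x > 0 := Real.sqrt_pos.mpr h0
  field_simp

noncomputable def ff : ℝ → ℝ := fun θ => Real.cos (θ / 2) ^ 2

lemma ff_gg {x : ℝ} (hx : x ∈ Icc (0:ℝ) 1) : ff (gg x) = x := by
  obtain ⟨h0, h1⟩ := hx
  have hle : Real.sqrt x ≤ 1 := Real.sqrt_le_one.mpr h1
  have hge : (-1:ℝ) ≤ Real.sqrt x := by linarith [Real.sqrt_nonneg x]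
  simp only [ff, gg]
  rw [show 2 * Real.arccos (Real.sqrt x) / 2 = Real.arccos (Real.sqrt x) by ring,
    Real.cos_arccos hge hle, Real.sq_sqrt h0]

lemma gg_inj : InjOn gg (Ioo (0:ℝ) 1) := by
  intro a ha b hb h
  have := ff_gg (Ioo_subset_Icc_self ha)
  have h2 := ff_gg (Ioo_subset_Icc_self hb)
  rw [← this, ← h2, h]

lemma gg_image : gg '' (Ioo (0:ℝ) 1) = Ioo 0 Real.pi := by
  ext y
  constructor
  · rintro ⟨x, ⟨h0, h1⟩, rfl⟩
    have hs0 : 0 < Real.sqrt x := Real.sqrt_pos.mpr h0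
    have hs1 : Real.sqrt x < 1 := by
      rw [show (1:ℝ) = Real.sqrt 1 by simp]
      exact Real.sqrt_lt_sqrt h0.le h1
    have harc1 : Real.arccos (Real.sqrt x) < Real.pi / 2 :=
      Real.arccos_lt_pi_div_two.mpr hs0
    have harc0 : 0 < Real.arccos (Real.sqrt x) := Real.arccos_pos.mpr hs1
    constructor
    · simp only [gg]; linarith
    · simp only [gg]; linarith
  · rintro ⟨h0, h1⟩
    refine ⟨Real.cos (y / 2) ^ 2, ⟨?_, ?_⟩, ?_⟩
    · have : 0 < Real.cos (y / 2) := Real.cos_pos_of_mem_Ioo ⟨by linarith [Real.pi_pos], by linarith⟩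
      positivity
    · have h2 : Real.cos (y / 2) < 1 := by
        have : Real.cos (y/2) ≠ 1 := by
          intro h
          have := Real.cos_eq_one_iff_of_lt_of_lt (x := y/2) (by linarith [Real.pi_pos]) (by linarith [Real.pi_gt_three]) |>.mp h
          linarith
        exact lt_of_le_of_ne (Real.cos_le_one _) this
      have h3 : 0 < Real.cos (y / 2) := Real.cos_pos_of_mem_Ioo ⟨by linarith [Real.pi_pos], by linarith⟩
      nlinarith
    · have h3 : 0 ≤ Real.cos (y / 2) := le_of_lt (Real.cos_pos_of_mem_Ioo ⟨by linarith [Real.pi_pos], by linarith⟩)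
      simp only [gg]
      rw [Real.sqrt_sq h3, Real.arccos_cos (by linarith) (by linarith)]
      ring

lemma gg_meas : Measurable gg :=
  (continuous_const.mul (Real.continuous_arccos.comp Real.continuous_sqrt)).measurable

lemma ff_meas : Measurable ff := by
  have : Continuous ff := by
    unfold ff; fun_prop
  exact this.measurable

noncomputable def DD : ℝ → ℝ≥0∞ := fun x => ENNReal.ofReal (1 / Real.sqrt (x * (1 - x)))

lemma DD_meas : Measurable DD := by
  unfold DD
  exact (measurable_const.div ((measurable_id.mul (measurable_const.sub measurable_id)).sqrt)).ennreal_ofReal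

lemma step1 : Measure.map gg ((volume.restrict (Ioo (0:ℝ) 1)).withDensity DD)
    = volume.restrict (Ioo 0 Real.pi) := by
  have h := map_withDensity_abs_det_fderiv_eq_addHaar (volume : Measure ℝ)
    measurableSet_Ioo.nullMeasurableSet
    (f' := fun x => ContinuousLinearMap.smulRight (1 : ℝ →L[ℝ] ℝ) (-(1 / Real.sqrt (x * (1 - x)))))
    (fun x hx => ((gg_deriv hx).hasDerivWithinAt).hasFDerivWithinAt)
    gg_inj
  rw [gg_image] at h
  rw [← h]
  have he : (fun x : ℝ => ENNReal.ofReal |((fun x => ContinuousLinearMap.smulRight (1:ℝ→L[ℝ]ℝ) (-(1 / Real.sqrt (x * (1 - x))))) x).det|) = DD := by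
    funext x
    rw [ContinuousLinearMap.det_smulRight, ContinuousLinearMap.one_apply, one_mul]
    simp only [DD, abs_neg, abs_div, abs_one]
    rw [abs_of_nonneg (Real.sqrt_nonneg _)]
  rw [he]

lemma step2 : Measure.map ff (volume.restrict (Ioo (0:ℝ) Real.pi))
    = (volume.restrict (Ioo (0:ℝ) 1)).withDensity DD := by
  rw [← step1, Measure.map_map ff_meas gg_meas]
  have hnull : ((volume.restrict (Ioo (0:ℝ) 1)).withDensity DD) (Ioo (0:ℝ) 1)ᶜ = 0 := by
    rw [withDensity_apply _ measurableSet_Ioo.compl,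
      Measure.restrict_restrict measurableSet_Ioo.compl]
    simp
  have hae : (ff ∘ gg) =ᵐ[(volume.restrict (Ioo (0:ℝ) 1)).withDensity DD] id := by
    filter_upwards [measure_eq_zero_iff_ae_notMem.mp hnull] with x hx
    simp only [Function.comp, id]
    exact ff_gg (Ioo_subset_Icc_self (not_not.mp hx))
  rw [Measure.map_congr hae, Measure.map_id]

lemma ff_neg : ff ∘ Neg.neg = ff := by
  funext θ
  simp only [Function.comp, ff, neg_div, Real.cos_neg]

lemma hpre : (Neg.neg ⁻¹' (Ioo (-Real.pi) 0) : Set ℝ) = Ioo 0 Real.pi := by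
  ext x
  simp only [mem_preimage, mem_Ioo]
  constructor
  · rintro ⟨h1, h2⟩; exact ⟨by linarith, by linarith⟩
  · rintro ⟨h1, h2⟩; exact ⟨by linarith, by linarith⟩

lemma hneg : Measure.map Neg.neg (volume.restrict (Ioo (0:ℝ) Real.pi)) = volume.restrict (Ioo (-Real.pi) 0) := by
  rw [← hpre, ← Measure.restrict_map measurable_neg measurableSet_Ioo,
    Measure.map_neg_eq_self]

lemma step3 : Measure.map ff (volume.restrict (Icc (-Real.pi) Real.pi))
    = Measure.map ff (volume.restrict (Ioo (0:ℝ) Real.pi))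
      + Measure.map ff (volume.restrict (Ioo (0:ℝ) Real.pi)) := by
  have hsub1 : (Icc (-Real.pi) Real.pi \ (Ioo (-Real.pi) 0 ∪ Ioo 0 Real.pi) : Set ℝ)
      ⊆ ({-Real.pi, 0, Real.pi} : Set ℝ) := by
    intro x hx
    obtain ⟨⟨h1, h2⟩, h3⟩ := hx
    simp only [mem_union, mem_Ioo, not_or, not_and_or, not_lt] at h3
    simp only [mem_insert_iff, mem_singleton_iff]
    obtain ⟨ha, hb⟩ := h3
    rcases ha with ha | ha
    · left; linarith
    · rcases hb with hb | hb
      · right; left; linarith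
      · right; right; linarith
  have hsub2 : ((Ioo (-Real.pi) 0 ∪ Ioo 0 Real.pi : Set ℝ) \ Icc (-Real.pi) Real.pi) = ∅ := by
    ext x
    simp only [mem_diff, mem_union, mem_Ioo, mem_Icc, mem_empty_iff_false, iff_false, not_and,
      not_not]
    rintro (⟨h1, h2⟩ | ⟨h1, h2⟩) <;> push_neg <;>
      exact ⟨by linarith [Real.pi_pos], by linarith [Real.pi_pos]⟩
  have hset : (Icc (-Real.pi) Real.pi : Set ℝ) =ᵐ[volume] ((Ioo (-Real.pi) 0 ∪ Ioo 0 Real.pi : Set ℝ)) := by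
    rw [MeasureTheory.ae_eq_set]
    refine ⟨measure_mono_null hsub1 (Set.Finite.measure_zero (by simp) _), ?_⟩
    rw [hsub2]; simp
  rw [Measure.restrict_congr_set hset,
    Measure.restrict_union (by
      apply Set.disjoint_left.mpr
      rintro x ⟨_, h2⟩ ⟨h3, _⟩
      linarith) measurableSet_Ioo,
    Measure.map_add _ _ ff_meas, ← hneg, Measure.map_map ff_meas measurable_neg, ff_neg]


theorem fidelity_pushforward_arcsine :
    Measure.map (fun θ : ℝ => Real.cos (θ / 2) ^ 2)
        ((ENNReal.ofReal (2 * Real.pi))⁻¹ •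
          (volume.restrict (Set.Icc (-Real.pi) Real.pi))) =
      volume.withDensity
        (Set.indicator (Set.Ioo (0 : ℝ) 1)
          (fun x => ENNReal.ofReal (1 / (Real.pi * Real.sqrt (x * (1 - x)))))) := by
  show Measure.map ff _ = _
  rw [Measure.map_smul, step3, step2, withDensity_indicator measurableSet_Ioo,
    ← withDensity_add_right _ DD_meas, ← withDensity_smul' _ (DD + DD) (ENNReal.inv_ne_top.mpr (by simp [ENNReal.ofReal_eq_zero]; positivity))]
  congr 1
  funext x
  simp only [Pi.smul_apply, Pi.add_apply, smul_eq_mul, DD]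
  rw [← ENNReal.ofReal_add (by positivity) (by positivity),
    ← ENNReal.ofReal_inv_of_pos (by positivity : (0:ℝ) < 2 * Real.pi),
    ← ENNReal.ofReal_mul (by positivity)]
  congr 1
  rcases eq_or_lt_of_le (Real.sqrt_nonneg (x * (1 - x))) with h | h
  · rw [← h]; simp
  · have hpi := Real.pi_pos
    field_simp
    ring
end
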